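/- For every Δ-regular Lucas sequence U(P,Q) and every n ≥ 1, the Lucasnomial Catalan number C_{U,1}(n) = (1/U_{n+1}) · (U_{2n}·U_{2n−1}···U_{n+1})/(U_n·U_{n−1}···U_1) is an integer. -/
import Mathlib


/-- The Lucas sequence `U(P,Q)`: `U_0 = 0`, `U_1 = 1`, `U_{n+2} = P·U_{n+1} − Q·U_n`. -/
def lucasU (P Q : ℤ) : ℕ → ℤ
  | 0 => 0
  | 1 => 1
  | n + 2 => P * lucasU P Q (n + 1) - Q * lucasU P Q n

/-- The generalized factorial `n!_U = U_n U_{n−1} ⋯ U_1`. -/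
def lucasFact (P Q : ℤ) (n : ℕ) : ℤ := ∏ i ∈ Finset.range n, lucasU P Q (i + 1)

lemma lucasFact_succ (P Q : ℤ) (n : ℕ) :
    lucasFact P Q (n + 1) = lucasFact P Q n * lucasU P Q (n + 1) :=
  Finset.prod_range_succ _ _

lemma lucasFact_zero (P Q : ℤ) : lucasFact P Q 0 = 1 := rfl

/-- Addition formula. -/
lemma lucasU_add (P Q : ℤ) (m n : ℕ) :
    lucasU P Q (m + 1 + n) =
      lucasU P Q (m + 1) * lucasU P Q (n + 1) - Q * lucasU P Q m * lucasU P Q n := by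
  induction m using Nat.twoStepInduction with
  | zero => simp [lucasU, Nat.add_comm]
  | one =>
    rw [show 1 + 1 + n = n + 2 from by omega]
    show P * lucasU P Q (n + 1) - Q * lucasU P Q n = _
    rw [show (1 + 1 : ℕ) = 2 from rfl]
    show _ = (P * lucasU P Q 1 - Q * lucasU P Q 0) * _ - Q * 1 * _
    simp only [lucasU]
    ring
  | more m ih1 ih2 =>
    have h1 : m + 2 + 1 + n = (m + 1 + n) + 2 := by omega
    have h2 : m + 1 + 1 + n = (m + n + 1) + 1 := by omega
    have h2' : m + 1 + n = m + n + 1 := by omega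
    rw [h1]
    show P * lucasU P Q (m + 1 + n + 1) - Q * lucasU P Q (m + 1 + n) = _
    have e1 : m + 1 + n + 1 = (m + 1) + 1 + n := by omega
    rw [e1, ih2, h2', ← h2', ih1]
    show _ = (P * lucasU P Q (m + 2) - Q * lucasU P Q (m + 1)) * _ -
      Q * (P * lucasU P Q (m + 1) - Q * lucasU P Q m) * _
    ring

/-- Lucasnomial coefficients are integers. -/
lemma lucasFact_mul_dvd (P Q : ℤ) :
    ∀ a b : ℕ, lucasFact P Q a * lucasFact P Q b ∣ lucasFact P Q (a + b) := by
  have key : ∀ s : ℕ, ∀ a b : ℕ, a + b = s →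
      lucasFact P Q a * lucasFact P Q b ∣ lucasFact P Q (a + b) := by
    intro s
    induction s using Nat.strong_induction_on with
    | _ s ih =>
      intro a b hs
      match a, b with
      | 0, b => simp [lucasFact_zero]
      | a, 0 => simp [lucasFact_zero]
      | a' + 1, b' + 1 =>
        have hsum : a' + 1 + (b' + 1) = (a' + 1 + b') + 1 := by omega
        rw [hsum, lucasFact_succ P Q (a' + 1 + b')]
        have hadd : lucasU P Q (a' + 1 + b' + 1) =
            lucasU P Q (a' + 1) * lucasU P Q (b' + 1 + 1) -
              Q * lucasU P Q a' * lucasU P Q (b' + 1) := by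
          have : a' + 1 + b' + 1 = a' + 1 + (b' + 1) := by omega
          rw [this, lucasU_add P Q a' (b' + 1)]
        rw [hadd, mul_sub]
        apply dvd_sub
        · -- term 1 : a!b! ∣ (a+b-1)! * (U_a * U_{b+1})
          have ih1 : lucasFact P Q a' * lucasFact P Q (b' + 1) ∣
              lucasFact P Q (a' + (b' + 1)) :=
            ih (a' + (b' + 1)) (by omega) a' (b' + 1) rfl
          have e : a' + (b' + 1) = a' + 1 + b' := by omega
          rw [e] at ih1
          calc lucasFact P Q (a' + 1) * lucasFact P Q (b' + 1)
              = (lucasFact P Q a' * lucasFact P Q (b' + 1)) * lucasU P Q (a' + 1) := by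
                rw [lucasFact_succ]; ring
            _ ∣ lucasFact P Q (a' + 1 + b') * (lucasU P Q (a' + 1) * lucasU P Q (b' + 1 + 1)) := by
                have := mul_dvd_mul_right ih1 (lucasU P Q (a' + 1))
                exact dvd_trans this (mul_dvd_mul_left _ (dvd_mul_right _ _))
        · -- term 2
          have ih2 : lucasFact P Q (a' + 1) * lucasFact P Q b' ∣
              lucasFact P Q (a' + 1 + b') :=
            ih (a' + 1 + b') (by omega) (a' + 1) b' rfl
          calc lucasFact P Q (a' + 1) * lucasFact P Q (b' + 1)
              = (lucasFact P Q (a' + 1) * lucasFact P Q b') * lucasU P Q (b' + 1) := by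
                rw [lucasFact_succ P Q b']; ring
            _ ∣ lucasFact P Q (a' + 1 + b') * (Q * lucasU P Q a' * lucasU P Q (b' + 1)) := by
                have := mul_dvd_mul_right ih2 (lucasU P Q (b' + 1))
                exact dvd_trans this (mul_dvd_mul_left _ ⟨Q * lucasU P Q a', by ring⟩)
  intro a b
  exact key (a + b) a b rfl

/-- Consecutive terms are coprime, and `Q` is coprime to `U_{n+1}`. -/
lemma lucasU_coprime (P Q : ℤ) (hcop : IsCoprime P Q) (n : ℕ) :
    IsCoprime (lucasU P Q (n + 1)) (lucasU P Q n) ∧ IsCoprime Q (lucasU P Q (n + 1)) := by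
  induction n with
  | zero =>
    constructor
    · show IsCoprime (1 : ℤ) 0
      exact isCoprime_one_left
    · show IsCoprime Q 1
      exact isCoprime_one_right
  | succ n ih =>
    obtain ⟨h1, h2⟩ := ih
    have hrec : lucasU P Q (n + 2) = P * lucasU P Q (n + 1) - Q * lucasU P Q n := rfl
    have hc1 : IsCoprime (lucasU P Q (n + 2)) (lucasU P Q (n + 1)) := by
      have : IsCoprime (-(Q * lucasU P Q n)) (lucasU P Q (n + 1)) :=
        (IsCoprime.mul_left h2 h1.symm).neg_left
      have h3 := this.add_mul_right_left P
      have e : -(Q * lucasU P Q n) + P * lucasU P Q (n + 1) =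
          P * lucasU P Q (n + 1) - Q * lucasU P Q n := by ring
      rw [e] at h3
      rw [hrec]; exact h3
    have hc2 : IsCoprime Q (lucasU P Q (n + 2)) := by
      have : IsCoprime Q (P * lucasU P Q (n + 1)) := hcop.symm.mul_right h2
      have h3 := this.add_mul_left_right (-(lucasU P Q n))
      have e : P * lucasU P Q (n + 1) + Q * -(lucasU P Q n) =
          P * lucasU P Q (n + 1) - Q * lucasU P Q n := by ring
      rw [e] at h3
      rw [hrec]; exact h3
    exact ⟨hc1, hc2⟩

/-- For every Δ-regular Lucas sequence `U(P,Q)` and every `n ≥ 1`, the Lucasnomial Catalan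
number `C_{U,1}(n) = (1/U_{n+1}) · (2n)!_U/(n!_U)²` is an integer. -/
theorem stmt14 (P Q : ℤ) (hP : P ≠ 0) (hQ : Q ≠ 0) (hcop : IsCoprime P Q)
    (hreg : ∀ n : ℕ, 1 ≤ n → lucasU P Q n ≠ 0) (hΔ : P ^ 2 - 4 * Q ≠ 0) :
    ∀ n : ℕ, 1 ≤ n →
      lucasU P Q (n + 1) * (lucasFact P Q n) ^ 2 ∣ lucasFact P Q (2 * n) := by
  intro n hn
  obtain ⟨m, rfl⟩ : ∃ m, n = m + 1 := ⟨n - 1, by omega⟩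
  obtain ⟨a, b, hab⟩ := (lucasU_coprime P Q hcop (m + 1)).1
  have d1 : lucasFact P Q (m + 1) * lucasFact P Q (m + 1) ∣ lucasFact P Q (2 * (m + 1)) := by
    have := lucasFact_mul_dvd P Q (m + 1) (m + 1)
    rwa [show m + 1 + (m + 1) = 2 * (m + 1) by ring] at this
  have d2 : lucasFact P Q (m + 2) * lucasFact P Q m ∣ lucasFact P Q (2 * (m + 1)) := by
    have := lucasFact_mul_dvd P Q (m + 2) m
    rwa [show m + 2 + m = 2 * (m + 1) by omega] at this
  have h1 : lucasU P Q (m + 1 + 1) * (lucasFact P Q (m + 1)) ^ 2 ∣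
      lucasU P Q (m + 1 + 1) * lucasFact P Q (2 * (m + 1)) := by
    apply mul_dvd_mul_left
    rwa [sq]
  have h2 : lucasU P Q (m + 1 + 1) * (lucasFact P Q (m + 1)) ^ 2 ∣
      lucasU P Q (m + 1) * lucasFact P Q (2 * (m + 1)) := by
    have key : lucasU P Q (m + 1 + 1) * (lucasFact P Q (m + 1)) ^ 2 =
        lucasU P Q (m + 1) * (lucasFact P Q (m + 2) * lucasFact P Q m) := by
      rw [show m + 2 = (m + 1) + 1 from rfl, lucasFact_succ P Q (m + 1), lucasFact_succ P Q m]
      ring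
    rw [key]
    exact mul_dvd_mul_left _ d2
  have final : lucasFact P Q (2 * (m + 1)) =
      a * (lucasU P Q (m + 1 + 1) * lucasFact P Q (2 * (m + 1))) +
        b * (lucasU P Q (m + 1) * lucasFact P Q (2 * (m + 1))) := by
    calc lucasFact P Q (2 * (m + 1)) = (a * lucasU P Q (m + 1 + 1) + b * lucasU P Q (m + 1)) *
        lucasFact P Q (2 * (m + 1)) := by rw [hab, one_mul]
      _ = _ := by ring
  rw [final]
  exact dvd_add (Dvd.dvd.mul_left h1 a) (Dvd.dvd.mul_left h2 b)
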